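/- Let S ⊆ B(H)_sa be an invex set with respect to η : S × S → B(H)_sa satisfying condition C, and let f : ℝ → ℝ be continuous, nonnegative, and operator preinvex with respect to η on S. Then for every A, B ∈ S, every a, b ∈ (0,1) with a < b, and every x ∈ H with ‖x‖ = 1, the following inequality holds: |(1/2)∫₀ᵃ ⟨f(A + sη(B,A))x, x⟩ ds + (1/2)∫₀ᵇ ⟨f(A + sη(B,A))x, x⟩ ds − (1/(b−a))∫ₐᵇ (∫₀ᵗ ⟨f(A + sη(B,A))x, x⟩ ds) dt| ≤ ((b−a)/8)·[⟨f(A + aη(B,A))x, x⟩ + ⟨f(A + bη(B,A))x, x⟩]. -/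

import Mathlib

open scoped InnerProductSpace
open MeasureTheory

private lemma integral_quadratic' (c0 c1 c2 p q : ℝ) :
    ∫ t in p..q, (c0 + c1*t + c2*t^2) =
      c0*(q-p) + c1*(q^2-p^2)/2 + c2*(q^3-p^3)/3 := by
  have h : ∀ t : ℝ, HasDerivAt (fun t : ℝ => c0*t + c1*t^2/2 + c2*t^3/3)
      (c0 + c1*t + c2*t^2) t := by
    intro t
    have h1 : HasDerivAt (fun t : ℝ => c0*t) c0 t := by
      simpa using (hasDerivAt_id t).const_mul c0
    have h2 : HasDerivAt (fun t : ℝ => c1*t^2/2) (c1*t) t := by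
      have := ((hasDerivAt_pow 2 t).const_mul c1).div_const 2
      simpa using this.congr_deriv (by ring)
    have h3 : HasDerivAt (fun t : ℝ => c2*t^3/3) (c2*t^2) t := by
      have := ((hasDerivAt_pow 3 t).const_mul c2).div_const 3
      simpa using this.congr_deriv (by ring)
    exact (h1.add h2).add h3
  rw [intervalIntegral.integral_eq_sub_of_hasDerivAt (fun t _ => h t)
    ((by continuity : Continuous fun t : ℝ => c0 + c1*t + c2*t^2).intervalIntegrable p q)]
  ring

set_option maxHeartbeats 1000000 in
private theorem trapezoid_est' (g : ℝ → ℝ) (a b : ℝ) (ha : 0 < a) (hb : b < 1) (hab : a < b)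
    (hcvx : ConvexOn ℝ (Set.Icc (0:ℝ) 1) g) (hnn : ∀ t, 0 ≤ g t) :
    |(2:ℝ)⁻¹ * (∫ s in (0:ℝ)..a, g s) + (2:ℝ)⁻¹ * (∫ s in (0:ℝ)..b, g s) -
        (b - a)⁻¹ * ∫ t in a..b, (∫ s in (0:ℝ)..t, g s)| ≤
      (b - a) / 8 * (g a + g b) := by
  have hab' : (0:ℝ) < b - a := by linarith
  have hne : b - a ≠ 0 := ne_of_gt hab'
  set m : ℝ := (a+b)/2 with hm
  have ham : a ≤ m := by rw [hm]; linarith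
  have hmb : m ≤ b := by rw [hm]; linarith
  have hgm : ContinuousOn g (Set.Ioo (0:ℝ) 1) := by
    have := hcvx.continuousOn_interior
    rwa [interior_Icc] at this
  have hint : ∀ p q : ℝ, 0 ≤ p → p ≤ q → q < 1 → IntervalIntegrable g volume p q := by
    intro p q hp hpq hq
    rw [intervalIntegrable_iff_integrableOn_Ioc_of_le hpq]
    have hsub : Set.Ioc p q ⊆ Set.Ioo (0:ℝ) 1 := fun t ht =>
      ⟨lt_of_le_of_lt hp ht.1, lt_of_le_of_lt ht.2 hq⟩
    have hmeas : AEStronglyMeasurable g (volume.restrict (Set.Ioc p q)) :=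
      (hgm.mono hsub).aestronglyMeasurable measurableSet_Ioc
    refine Integrable.mono' (g := fun _ => max (g 0) (g 1))
      (integrableOn_const measure_Ioc_lt_top.ne) hmeas ?_
    refine (ae_restrict_iff' measurableSet_Ioc).mpr (Filter.Eventually.of_forall ?_)
    intro t ht
    have ht' : t ∈ Set.Icc (0:ℝ) 1 := ⟨le_of_lt (lt_of_le_of_lt hp ht.1),
      le_of_lt (lt_of_le_of_lt ht.2 hq)⟩
    have hcomb := hcvx.2 (Set.left_mem_Icc.mpr zero_le_one) (Set.right_mem_Icc.mpr zero_le_one)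
      (by linarith [ht'.2] : (0:ℝ) ≤ 1 - t) ht'.1 (by ring)
    have harg : (1-t) • (0:ℝ) + t • (1:ℝ) = t := by simp
    rw [harg] at hcomb
    simp only [smul_eq_mul] at hcomb
    rw [Real.norm_eq_abs, abs_of_nonneg (hnn t)]
    nlinarith [le_max_left (g 0) (g 1), le_max_right (g 0) (g 1), ht'.1, ht'.2]
  have hG : ∀ t ∈ Set.uIcc a b, HasDerivAt (fun u => ∫ s in (0:ℝ)..u, g s) (g t) t := by
    intro t ht
    rw [Set.uIcc_of_le hab.le] at ht
    have htI : t ∈ Set.Ioo (0:ℝ) 1 := ⟨lt_of_lt_of_le ha ht.1, lt_of_le_of_lt ht.2 hb⟩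
    have hct : ContinuousAt g t := hgm.continuousAt (isOpen_Ioo.mem_nhds htI)
    exact intervalIntegral.integral_hasDerivAt_right
      (hint 0 t le_rfl (by linarith [ht.1]) (by linarith [ht.2]))
      (hgm.stronglyMeasurableAtFilter isOpen_Ioo t htI) hct
  have hgab : IntervalIntegrable g volume a b := hint a b ha.le hab.le hb
  have hIBP := intervalIntegral.integral_mul_deriv_eq_deriv_mul
    (u := fun t => t - m) (u' := fun _ => (1:ℝ)) (v := fun u => ∫ s in (0:ℝ)..u, g s)
    (v' := g) (fun t _ => (hasDerivAt_id t).sub_const m) hG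
    (intervalIntegrable_const) hgab
  have hell : ∀ t ∈ Set.Icc a b, g t ≤ ((b-t)*g a + (t-a)*g b)/(b-a) := by
    intro t ht
    have haI : a ∈ Set.Icc (0:ℝ) 1 := ⟨ha.le, by linarith⟩
    have hbI : b ∈ Set.Icc (0:ℝ) 1 := ⟨by linarith, hb.le⟩
    have h1 : (0:ℝ) ≤ (b-t)/(b-a) := div_nonneg (by linarith [ht.2]) hab'.le
    have h2 : (0:ℝ) ≤ (t-a)/(b-a) := div_nonneg (by linarith [ht.1]) hab'.le
    have h3 : (b-t)/(b-a) + (t-a)/(b-a) = 1 := by field_simp; ring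
    have hcomb := hcvx.2 haI hbI h1 h2 h3
    simp only [smul_eq_mul] at hcomb
    have harg : ((b-t)/(b-a)) * a + ((t-a)/(b-a)) * b = t := by
      field_simp
      ring
    rw [harg] at hcomb
    calc g t ≤ ((b-t)/(b-a)) * g a + ((t-a)/(b-a)) * g b := hcomb
      _ = ((b-t)*g a + (t-a)*g b)/(b-a) := by ring
  have hcont_ell : Continuous fun t => (t-m)*(((b-t)*g a + (t-a)*g b)/(b-a)) := by
    continuity
  have hintam : IntervalIntegrable (fun t => (t-m)*g t) volume a m :=
    (hint a m ha.le ham (by linarith)).continuousOn_mul (by fun_prop)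
  have hintmb : IntervalIntegrable (fun t => (t-m)*g t) volume m b :=
    (hint m b (by linarith) hmb hb).continuousOn_mul (by fun_prop)
  have hsplit : (∫ t in a..m, (t-m)*g t) + (∫ t in m..b, (t-m)*g t)
      = ∫ t in a..b, (t-m)*g t :=
    intervalIntegral.integral_add_adjacent_intervals hintam hintmb
  have hI2nn : 0 ≤ ∫ t in m..b, (t-m)*g t :=
    intervalIntegral.integral_nonneg hmb
      (fun t ht => mul_nonneg (by linarith [ht.1]) (hnn t))
  have hI1np : (∫ t in a..m, (t-m)*g t) ≤ 0 := by
    rw [← neg_nonneg, ← intervalIntegral.integral_neg]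
    refine intervalIntegral.integral_nonneg ham (fun t ht => ?_)
    have h := mul_nonneg (by linarith [ht.2] : (0:ℝ) ≤ m - t) (hnn t)
    nlinarith [h]
  have hJ2 : (∫ t in m..b, (t-m)*(((b-t)*g a + (t-a)*g b)/(b-a)))
      = (b-a)^2/48 * (g a + 5*g b) := by
    have hfun : Set.EqOn (fun t => (t-m)*(((b-t)*g a + (t-a)*g b)/(b-a)))
        (fun t => ((a*m*(g b) - m*b*(g a))/(b-a)) + (((b+m)*g a - (a+m)*g b)/(b-a))*t
          + ((g b - g a)/(b-a))*t^2) (Set.uIcc m b) := by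
      intro t _
      field_simp
      ring
    rw [intervalIntegral.integral_congr hfun, integral_quadratic', hm]
    field_simp
    ring
  have hJ1 : (∫ t in a..m, (t-m)*(((b-t)*g a + (t-a)*g b)/(b-a)))
      = (-((b-a)^2/48)) * (5*g a + g b) := by
    have hfun : Set.EqOn (fun t => (t-m)*(((b-t)*g a + (t-a)*g b)/(b-a)))
        (fun t => ((a*m*(g b) - m*b*(g a))/(b-a)) + (((b+m)*g a - (a+m)*g b)/(b-a))*t
          + ((g b - g a)/(b-a))*t^2) (Set.uIcc a m) := by
      intro t _
      field_simp
      ring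
    rw [intervalIntegral.integral_congr hfun, integral_quadratic', hm]
    field_simp
    ring
  have hI2le : (∫ t in m..b, (t-m)*g t)
      ≤ ∫ t in m..b, (t-m)*(((b-t)*g a + (t-a)*g b)/(b-a)) := by
    refine intervalIntegral.integral_mono_on hmb hintmb
      (hcont_ell.intervalIntegrable m b) ?_
    intro t ht
    exact mul_le_mul_of_nonneg_left (hell t ⟨le_trans ham ht.1, ht.2⟩) (by linarith [ht.1])
  have hI1ge : (∫ t in a..m, (t-m)*(((b-t)*g a + (t-a)*g b)/(b-a)))
      ≤ ∫ t in a..m, (t-m)*g t := by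
    refine intervalIntegral.integral_mono_on ham
      (hcont_ell.intervalIntegrable a m) hintam ?_
    intro t ht
    exact mul_le_mul_of_nonpos_left (hell t ⟨ht.1, le_trans ht.2 hmb⟩) (by linarith [ht.2])
  have hE : (2:ℝ)⁻¹ * (∫ s in (0:ℝ)..a, g s) + (2:ℝ)⁻¹ * (∫ s in (0:ℝ)..b, g s) -
      (b - a)⁻¹ * (∫ t in a..b, (∫ s in (0:ℝ)..t, g s))
      = (b-a)⁻¹ * ((∫ t in a..m, (t-m)*g t) + (∫ t in m..b, (t-m)*g t)) := by
    rw [hsplit, hIBP]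
    have h1 : b - m = (b-a)/2 := by rw [hm]; ring
    have h2 : a - m = -((b-a)/2) := by rw [hm]; ring
    field_simp
    ring
  rw [hE, abs_le]
  constructor
  · have hlow : (-((b-a)^2/48)) * (5*g a + g b) ≤
        (∫ t in a..m, (t-m)*g t) + (∫ t in m..b, (t-m)*g t) := by
      rw [← hJ1]
      linarith
    have := mul_le_mul_of_nonneg_left hlow (inv_nonneg.mpr hab'.le)
    refine le_trans ?_ this
    rw [show (b-a)⁻¹ * ((-((b-a)^2/48)) * (5*g a + g b)) = -((b-a)/48*(5*g a + g b)) by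
      field_simp]
    nlinarith [hnn a, hnn b]
  · have hup : (∫ t in a..m, (t-m)*g t) + (∫ t in m..b, (t-m)*g t)
        ≤ (b-a)^2/48 * (g a + 5*g b) := by
      rw [← hJ2]
      linarith
    have := mul_le_mul_of_nonneg_left hup (inv_nonneg.mpr hab'.le)
    refine this.trans ?_
    rw [show (b-a)⁻¹ * ((b-a)^2/48 * (g a + 5*g b)) = (b-a)/48*(g a + 5*g b) by
      field_simp]
    nlinarith [hnn a, hnn b]

set_option maxHeartbeats 2000000 in
/-- An estimate of Hermite–Hadamard type for the scalar-valued function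
`s ↦ ⟨f(A + sη(B,A))x, x⟩` attached to an operator preinvex nonnegative function `f`. -/
theorem dragomir_agarwal_operator_preinvex_inner
    {H : Type*} [NormedAddCommGroup H] [InnerProductSpace ℂ H] [CompleteSpace H]
    (S : Set (H →L[ℂ] H)) (hSsa : ∀ A ∈ S, IsSelfAdjoint A)
    (η : (H →L[ℂ] H) → (H →L[ℂ] H) → (H →L[ℂ] H))
    (hinvex : ∀ A ∈ S, ∀ B ∈ S, ∀ t ∈ Set.Icc (0:ℝ) 1, A + t • η B A ∈ S)
    (hC1 : ∀ A ∈ S, ∀ B ∈ S, ∀ t ∈ Set.Icc (0:ℝ) 1,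
      η A (A + t • η B A) = (-t) • η B A)
    (hC2 : ∀ A ∈ S, ∀ B ∈ S, ∀ t ∈ Set.Icc (0:ℝ) 1,
      η B (A + t • η B A) = (1 - t) • η B A)
    (f : ℝ → ℝ) (hf : Continuous f) (hfnonneg : ∀ t : ℝ, 0 ≤ f t)
    (hpreinvex : ∀ A ∈ S, ∀ B ∈ S, ∀ t ∈ Set.Icc (0:ℝ) 1,
      cfc f (A + t • η B A) ≤ (1 - t) • cfc f A + t • cfc f B) :
    ∀ A ∈ S, ∀ B ∈ S, ∀ a ∈ Set.Ioo (0:ℝ) 1, ∀ b ∈ Set.Ioo (0:ℝ) 1, a < b →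
      ∀ x : H, ‖x‖ = 1 →
      |(2:ℝ)⁻¹ * (∫ s in (0:ℝ)..a, RCLike.re ⟪(cfc f (A + s • η B A)) x, x⟫_ℂ) +
        (2:ℝ)⁻¹ * (∫ s in (0:ℝ)..b, RCLike.re ⟪(cfc f (A + s • η B A)) x, x⟫_ℂ) -
        (b - a)⁻¹ * ∫ t in a..b,
          (∫ s in (0:ℝ)..t, RCLike.re ⟪(cfc f (A + s • η B A)) x, x⟫_ℂ)| ≤
      (b - a) / 8 *
        (RCLike.re ⟪(cfc f (A + a • η B A)) x, x⟫_ℂ +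
          RCLike.re ⟪(cfc f (A + b • η B A)) x, x⟫_ℂ) := by
  intro A hA B hB a ha b hb hab x hx
  -- the key operator inequality expressing preinvexity along the segment
  have key : ∀ t1 ∈ Set.Icc (0:ℝ) 1, ∀ t2 ∈ Set.Icc (0:ℝ) 1, t1 ≤ t2 →
      ∀ l ∈ Set.Icc (0:ℝ) 1,
      cfc f (A + (t2 - l*(t2-t1)) • η B A) ≤
        (1-l) • cfc f (A + t2 • η B A) + l • cfc f (A + t1 • η B A) := by
    intro t1 ht1 t2 ht2 h12 l hl
    rcases eq_or_lt_of_le ht1.2 with h1 | h1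
    · have h2 : t2 = 1 := le_antisymm ht2.2 (h1 ▸ h12)
      rw [h1, h2, show (1:ℝ) - l*(1-1) = 1 by ring, ← add_smul,
        show (1:ℝ) - l + l = 1 by ring, one_smul, one_smul]
    · set s : ℝ := (t2 - t1)/(1 - t1) with hs
      have h1' : (0:ℝ) < 1 - t1 := by linarith
      have hs01 : s ∈ Set.Icc (0:ℝ) 1 := ⟨div_nonneg (by linarith) h1'.le,
        (div_le_one h1').mpr (by linarith [ht2.2])⟩
      have hY : A + t1 • η B A ∈ S := hinvex A hA B hB t1 ht1
      have hZ : A + t2 • η B A ∈ S := hinvex A hA B hB t2 ht2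
      have hηBY : η B (A + t1 • η B A) = (1 - t1) • η B A := hC2 A hA B hB t1 ht1
      have hZeq : (A + t1 • η B A) + s • η B (A + t1 • η B A) = A + t2 • η B A := by
        rw [hηBY, smul_smul, hs, div_mul_cancel₀ _ (ne_of_gt h1')]
        module
      have hηYZ : η (A + t1 • η B A) (A + t2 • η B A) = (-(t2 - t1)) • η B A := by
        have h := hC1 (A + t1 • η B A) hY B hB s hs01
        rw [hZeq, hηBY, smul_smul] at h
        rw [h]
        congr 1
        rw [hs]
        field_simp
      have hmain := hpreinvex (A + t2 • η B A) hZ (A + t1 • η B A) hY l hl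
      rw [hηYZ] at hmain
      have harg : A + t2 • η B A + l • (-(t2 - t1)) • η B A
          = A + (t2 - l*(t2-t1)) • η B A := by
        rw [smul_smul]
        module
      rwa [harg] at hmain
  -- monotonicity of the quadratic form in the Loewner order
  have hmono : ∀ P Q : (H →L[ℂ] H), P ≤ Q →
      RCLike.re ⟪P x, x⟫_ℂ ≤ RCLike.re ⟪Q x, x⟫_ℂ := by
    intro P Q h
    have h' := ((ContinuousLinearMap.le_def P Q).mp h).inner_nonneg_left x
    have e : ⟪(Q - P) x, x⟫_ℂ = ⟪Q x, x⟫_ℂ - ⟪P x, x⟫_ℂ := by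
      simp [ContinuousLinearMap.sub_apply, inner_sub_left]
    rw [e] at h'
    replace h' := (RCLike.nonneg_iff.mp h').1
    rw [map_sub] at h'
    linarith
  -- linearity of the quadratic form
  have hlin : ∀ (r u : ℝ) (P Q : H →L[ℂ] H),
      RCLike.re ⟪(r • P + u • Q) x, x⟫_ℂ
        = r * RCLike.re ⟪P x, x⟫_ℂ + u * RCLike.re ⟪Q x, x⟫_ℂ := by
    intro r u P Q
    rw [ContinuousLinearMap.add_apply, inner_add_left, map_add,
      ContinuousLinearMap.smul_apply, ContinuousLinearMap.smul_apply,
      RCLike.real_smul_eq_coe_smul (K := ℂ), RCLike.real_smul_eq_coe_smul (K := ℂ),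
      inner_smul_left, inner_smul_left, RCLike.conj_ofReal, RCLike.conj_ofReal,
      RCLike.re_ofReal_mul, RCLike.re_ofReal_mul]
  -- nonnegativity
  have hnn : ∀ t : ℝ, 0 ≤ RCLike.re ⟪(cfc f (A + t • η B A)) x, x⟫_ℂ := by
    intro t
    have h0 : (0 : H →L[ℂ] H) ≤ cfc f (A + t • η B A) := cfc_nonneg (fun y _ => hfnonneg y)
    have := hmono 0 _ h0
    simpa using this
  -- convexity of the scalar function
  have hcvx : ConvexOn ℝ (Set.Icc (0:ℝ) 1)
      (fun t => RCLike.re ⟪(cfc f (A + t • η B A)) x, x⟫_ℂ) := by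
    refine ⟨convex_Icc 0 1, ?_⟩
    intro p hp q hq u v hu hv huv
    simp only [smul_eq_mul]
    have hv' : v = 1 - u := by linarith
    subst hv'
    rcases le_total p q with hpq | hpq
    · have h := hmono _ _ (key p hp q hq hpq u ⟨hu, by linarith⟩)
      rw [hlin] at h
      calc RCLike.re ⟪(cfc f (A + (u*p + (1-u)*q) • η B A)) x, x⟫_ℂ
          = RCLike.re ⟪(cfc f (A + (q - u*(q-p)) • η B A)) x, x⟫_ℂ := by ring_nf
        _ ≤ (1-u) * RCLike.re ⟪(cfc f (A + q • η B A)) x, x⟫_ℂ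
            + u * RCLike.re ⟪(cfc f (A + p • η B A)) x, x⟫_ℂ := h
        _ = u * RCLike.re ⟪(cfc f (A + p • η B A)) x, x⟫_ℂ
            + (1-u) * RCLike.re ⟪(cfc f (A + q • η B A)) x, x⟫_ℂ := by ring
    · have h := hmono _ _ (key q hq p hp hpq (1-u) ⟨by linarith, by linarith⟩)
      rw [hlin] at h
      calc RCLike.re ⟪(cfc f (A + (u*p + (1-u)*q) • η B A)) x, x⟫_ℂ
          = RCLike.re ⟪(cfc f (A + (p - (1-u)*(p-q)) • η B A)) x, x⟫_ℂ := by ring_nf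
        _ ≤ (1-(1-u)) * RCLike.re ⟪(cfc f (A + p • η B A)) x, x⟫_ℂ
            + (1-u) * RCLike.re ⟪(cfc f (A + q • η B A)) x, x⟫_ℂ := h
        _ = u * RCLike.re ⟪(cfc f (A + p • η B A)) x, x⟫_ℂ
            + (1-u) * RCLike.re ⟪(cfc f (A + q • η B A)) x, x⟫_ℂ := by ring
  exact trapezoid_est' (fun t => RCLike.re ⟪(cfc f (A + t • η B A)) x, x⟫_ℂ)
    a b ha.1 hb.2 hab hcvx hnn
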